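/- arXiv:2409.09334 — 2 statements merged into one kernel-verified Lean document; each statement's English description precedes it below -/
import Mathlib

section
/- The function Φ_{n,λ}(x) := E_{ℓ∼𝕊^{n-1}}(exp(λ⟨ℓ,x⟩)) is monotone in the norm: for any x, y ∈ ℝⁿ with ‖x‖ ≤ ‖y‖, one has 1 ≤ Φ_{n,λ}(x) ≤ Φ_{n,λ}(y). -/
open MeasureTheory ProbabilityTheory Real
open scoped RealInnerProductSpace

/-- The Averaged Moment Generating Function `Φ_{n,λ}(x) = E_{ℓ∼μS} exp(λ⟨ℓ,x⟩)`,
where `μS` is the (uniform) distribution of `ℓ` on the unit sphere. -/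
noncomputable def amgf {n : ℕ} (μS : Measure (EuclideanSpace ℝ (Fin n))) (lam : ℝ)
    (x : EuclideanSpace ℝ (Fin n)) : ℝ :=
  ∫ l, Real.exp (lam * ⟪l, x⟫) ∂μS

/-- `μS` is the uniform probability measure on the unit sphere of `ℝⁿ`:
it is a probability measure, concentrated on the unit sphere, and invariant
under every rotation (linear isometry) of `ℝⁿ`. -/
def IsUniformOnSphere {n : ℕ} (μS : Measure (EuclideanSpace ℝ (Fin n))) : Prop :=
  IsProbabilityMeasure μS ∧
    μS (Metric.sphere (0 : EuclideanSpace ℝ (Fin n)) 1)ᶜ = 0 ∧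
    ∀ Q : EuclideanSpace ℝ (Fin n) ≃ₗᵢ[ℝ] EuclideanSpace ℝ (Fin n),
      Measure.map Q μS = μS

section Aux

variable {n : ℕ} {μS : Measure (EuclideanSpace ℝ (Fin n))}

lemma ae_norm_one (hμS : IsUniformOnSphere μS) : ∀ᵐ l ∂μS, ‖l‖ = 1 := by
  have h := hμS.2.1
  rw [MeasureTheory.ae_iff]
  convert h using 2
  ext l
  simp [mem_sphere_zero_iff_norm]

lemma cont_aux (c : ℝ) (x : EuclideanSpace ℝ (Fin n)) :
    Continuous fun l : EuclideanSpace ℝ (Fin n) => Real.exp (c * ⟪l, x⟫) :=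
  (continuous_const.mul (continuous_id.inner continuous_const)).rexp

lemma integrable_exp_aux (hμS : IsUniformOnSphere μS) (c : ℝ) (x : EuclideanSpace ℝ (Fin n)) :
    Integrable (fun l => Real.exp (c * ⟪l, x⟫)) μS := by
  have : IsProbabilityMeasure μS := hμS.1
  refine Integrable.mono' (integrable_const (Real.exp (|c| * ‖x‖)))
    (cont_aux c x).aestronglyMeasurable ?_
  filter_upwards [ae_norm_one hμS] with l hl
  rw [Real.norm_eq_abs, Real.abs_exp]
  refine Real.exp_le_exp.2 ?_
  calc c * ⟪l, x⟫ ≤ |c * ⟪l, x⟫| := le_abs_self _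
    _ = |c| * |⟪l, x⟫| := abs_mul _ _
    _ ≤ |c| * ‖x‖ := by
        refine mul_le_mul_of_nonneg_left ?_ (abs_nonneg c)
        calc |⟪l, x⟫| ≤ ‖l‖ * ‖x‖ := abs_real_inner_le_norm l x
          _ = ‖x‖ := by rw [hl, one_mul]

lemma amgf_inv (hμS : IsUniformOnSphere μS) (lam : ℝ)
    (Q : EuclideanSpace ℝ (Fin n) ≃ₗᵢ[ℝ] EuclideanSpace ℝ (Fin n))
    (x : EuclideanSpace ℝ (Fin n)) : amgf μS lam (Q x) = amgf μS lam x := by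
  unfold amgf
  conv_rhs => rw [← hμS.2.2 Q.symm]
  rw [integral_map Q.symm.continuous.measurable.aemeasurable
    (cont_aux lam x).aestronglyMeasurable]
  congr 1
  ext l
  congr 2
  exact (calc ⟪Q.symm l, x⟫ = ⟪Q (Q.symm l), Q x⟫ := (Q.inner_map_map _ _).symm
    _ = ⟪l, Q x⟫ := by rw [Q.apply_symm_apply]).symm

lemma amgf_neg (hμS : IsUniformOnSphere μS) (lam : ℝ) (x : EuclideanSpace ℝ (Fin n)) :
    amgf μS lam (-x) = amgf μS lam x := by
  have := amgf_inv hμS lam (LinearIsometryEquiv.neg ℝ) x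
  simpa using this

lemma amgf_eq_cosh (hμS : IsUniformOnSphere μS) (lam : ℝ) (x : EuclideanSpace ℝ (Fin n)) :
    amgf μS lam x = ∫ l, Real.cosh (lam * ⟪l, x⟫) ∂μS := by
  have hi := integrable_exp_aux hμS lam x
  have hi' := integrable_exp_aux hμS (-lam) x
  have hneg : amgf μS lam (-x) = amgf μS lam x := amgf_neg hμS lam x
  have h2 : amgf μS lam (-x) = ∫ l, Real.exp (-lam * ⟪l, x⟫) ∂μS := by
    unfold amgf
    congr 1; ext l
    rw [inner_neg_right]; ring_nf
  have key : ∀ l, Real.cosh (lam * ⟪l, x⟫) =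
      (Real.exp (lam * ⟪l, x⟫) + Real.exp (-lam * ⟪l, x⟫)) / 2 := by
    intro l
    rw [Real.cosh_eq]
    ring_nf
  calc amgf μS lam x = (amgf μS lam x + amgf μS lam (-x)) / 2 := by rw [hneg]; ring
    _ = (∫ l, Real.exp (lam * ⟪l, x⟫) ∂μS + ∫ l, Real.exp (-lam * ⟪l, x⟫) ∂μS) / 2 := by
        rw [h2]; rfl
    _ = ∫ l, (Real.exp (lam * ⟪l, x⟫) + Real.exp (-lam * ⟪l, x⟫)) / 2 ∂μS := by
        rw [integral_div, integral_add hi hi']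
    _ = ∫ l, Real.cosh (lam * ⟪l, x⟫) ∂μS := by
        congr 1; ext l; rw [key]

lemma integrable_cosh_aux (hμS : IsUniformOnSphere μS) (c : ℝ) (x : EuclideanSpace ℝ (Fin n)) :
    Integrable (fun l => Real.cosh (c * ⟪l, x⟫)) μS := by
  have hi := integrable_exp_aux hμS c x
  have hi' := integrable_exp_aux hμS (-c) x
  have : (fun l : EuclideanSpace ℝ (Fin n) => Real.cosh (c * ⟪l, x⟫)) =
      fun l => (Real.exp (c * ⟪l, x⟫) + Real.exp (-c * ⟪l, x⟫)) / 2 := by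
    ext l; rw [Real.cosh_eq]; ring_nf
  rw [this]
  exact (hi.add hi').div_const 2

lemma one_le_amgf (hμS : IsUniformOnSphere μS) (lam : ℝ) (x : EuclideanSpace ℝ (Fin n)) :
    1 ≤ amgf μS lam x := by
  have : IsProbabilityMeasure μS := hμS.1
  rw [amgf_eq_cosh hμS]
  have h1 : (1 : ℝ) = ∫ _ : EuclideanSpace ℝ (Fin n), (1 : ℝ) ∂μS := by simp
  rw [h1]
  exact integral_mono (integrable_const 1) (integrable_cosh_aux hμS lam x)
    (fun l => Real.one_le_cosh _)

end Aux

/-- monotonicity of the AMGF in the norm: if ‖x‖ ≤ ‖y‖ then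
`1 ≤ Φ_{n,λ}(x) ≤ Φ_{n,λ}(y)`. -/
theorem amgf_monotone {n : ℕ}
    (μS : Measure (EuclideanSpace ℝ (Fin n))) (hμS : IsUniformOnSphere μS)
    (lam : ℝ) (x y : EuclideanSpace ℝ (Fin n)) (hxy : ‖x‖ ≤ ‖y‖) :
    1 ≤ amgf μS lam x ∧ amgf μS lam x ≤ amgf μS lam y := by
  have : IsProbabilityMeasure μS := hμS.1
  refine ⟨one_le_amgf hμS lam x, ?_⟩
  rcases eq_or_ne x 0 with rfl | hx
  · have : amgf μS lam (0 : EuclideanSpace ℝ (Fin n)) = 1 := by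
      unfold amgf
      simp
    rw [this]
    exact one_le_amgf hμS lam y
  · have hxpos : (0 : ℝ) < ‖x‖ := norm_pos_iff.2 hx
    set c : ℝ := ‖y‖ / ‖x‖ with hc
    have hc1 : 1 ≤ c := (one_le_div hxpos).2 hxy
    have hc0 : 0 ≤ c := le_trans zero_le_one hc1
    have hnorm : ‖y‖ = ‖c • x‖ := by
      rw [norm_smul, Real.norm_eq_abs, abs_of_nonneg hc0, hc, div_mul_cancel₀ _ hxpos.ne']
    -- reflection sends y to c • x
    have href : (Submodule.reflection (ℝ ∙ (y - c • x))ᗮ) y = c • x :=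
      Submodule.reflection_sub hnorm
    have hy : amgf μS lam y = amgf μS lam (c • x) := by
      rw [← href, amgf_inv hμS]
    rw [hy, amgf_eq_cosh hμS lam x, amgf_eq_cosh hμS lam (c • x)]
    refine integral_mono (integrable_cosh_aux hμS lam x) (integrable_cosh_aux hμS lam (c • x)) ?_
    intro l
    dsimp only
    rw [real_inner_smul_right]
    refine Real.cosh_le_cosh.2 ?_
    have : lam * (c * ⟪l, x⟫) = c * (lam * ⟪l, x⟫) := by ring
    rw [this]
    calc |lam * ⟪l, x⟫| ≤ c * |lam * ⟪l, x⟫| := le_mul_of_one_le_left (abs_nonneg _) hc1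
      _ = |c * (lam * ⟪l, x⟫)| := by rw [abs_mul c, abs_of_nonneg hc0]
end

section
/- (Expectation bound on stochastic deviation) Let X_{t+1}=f(X_t,u_t,t)+w_t and x_{t+1}=f(x_t,u_t,t) with X_0 = x_0, where for each t, ‖f(x,u,t)−f(y,u,t)‖ ≤ L_t ‖x−y‖ for all x,y,u, and w_t ∈ ℝⁿ is independent of X_t, has zero mean, and each coordinate has variance at most σ_t². Then E(‖X_t − x_t‖²) ≤ n Ψ_t, where Ψ_t = ψ_{t-1} ∑_{k=0}^{t-1} σ_k² ψ_k^{-1} and ψ_t = ∏_{k=0}^{t} L_k². -/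
open MeasureTheory ProbabilityTheory Real
open scoped RealInnerProductSpace

section Aux

variable {n : ℕ}

lemma euclid_coord_abs_le_norm (y : EuclideanSpace ℝ (Fin n)) (i : Fin n) :
    |y i| ≤ ‖y‖ := by
  rw [EuclideanSpace.norm_eq]
  have h1 : |y i| = Real.sqrt (|y i| ^ 2) := by
    rw [Real.sqrt_sq (abs_nonneg _)]
  rw [h1]
  apply Real.sqrt_le_sqrt
  rw [sq_abs]
  have := Finset.single_le_sum (f := fun j => ‖y j‖ ^ 2)
    (fun j _ => sq_nonneg _) (Finset.mem_univ i)
  simpa [Real.norm_eq_abs, sq_abs] using this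

lemma euclid_norm_le_sum_abs (y : EuclideanSpace ℝ (Fin n)) :
    ‖y‖ ≤ ∑ i, |y i| := by
  rw [EuclideanSpace.norm_eq]
  have hS : (0:ℝ) ≤ ∑ i, |y i| := Finset.sum_nonneg fun i _ => abs_nonneg _
  have h2 : ∑ i, ‖y i‖ ^ 2 ≤ (∑ i, |y i|) ^ 2 := by
    rw [sq]
    calc ∑ i, ‖y i‖ ^ 2 ≤ ∑ i, |y i| * ∑ j, |y j| := by
          apply Finset.sum_le_sum
          intro i _
          rw [Real.norm_eq_abs, sq]
          exact mul_le_mul_of_nonneg_left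
            (Finset.single_le_sum (f := fun j => |y j|) (fun j _ => abs_nonneg _)
              (Finset.mem_univ i)) (abs_nonneg _)
      _ = (∑ i, |y i|) * ∑ j, |y j| := by rw [← Finset.sum_mul]
  calc Real.sqrt (∑ i, ‖y i‖ ^ 2) ≤ Real.sqrt ((∑ i, |y i|) ^ 2) := Real.sqrt_le_sqrt h2
    _ = ∑ i, |y i| := Real.sqrt_sq hS

lemma euclid_norm_sq_eq (y : EuclideanSpace ℝ (Fin n)) :
    ‖y‖ ^ 2 = ∑ i, (y i) ^ 2 := by
  rw [EuclideanSpace.norm_eq, Real.sq_sqrt]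
  · simp [Real.norm_eq_abs, sq_abs]
  · exact Finset.sum_nonneg fun i _ => sq_nonneg _

end Aux

/-- expectation bound on stochastic deviation: for the stochastic
system `X_{t+1} = f(X_t,u_t,t) + w_t` and its associated deterministic system
`x_{t+1} = f(x_t,u_t,t)` with `X_0 = x_0`, where `f(·,u,t)` is `L_t`-Lipschitz,
and `w_t` is independent of `X_t`, has mean zero and coordinate variances at most
`σ_t²`, one has `E ‖X_t - x_t‖² ≤ n Ψ_t` with
`Ψ_t = ψ_{t-1} ∑_{k<t} σ_k² ψ_k⁻¹`, `ψ_t = ∏_{k≤t} L_k²`. -/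
theorem expectation_bound_stochastic_deviation
    {Ω : Type*} [MeasurableSpace Ω] (μ : Measure Ω) [IsProbabilityMeasure μ]
    {n : ℕ} {U : Type*}
    (f : EuclideanSpace ℝ (Fin n) → U → ℕ → EuclideanSpace ℝ (Fin n))
    (u : ℕ → U) (L σ : ℕ → ℝ)
    (hL : ∀ t, 0 < L t) (hσ : ∀ t, 0 ≤ σ t)
    (hf : ∀ (t : ℕ) (v : U) (x y : EuclideanSpace ℝ (Fin n)),
      ‖f x v t - f y v t‖ ≤ L t * ‖x - y‖)
    (hfm : ∀ t, Measurable (fun x => f x (u t) t))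
    (X : ℕ → Ω → EuclideanSpace ℝ (Fin n))
    (x : ℕ → EuclideanSpace ℝ (Fin n))
    (w : ℕ → Ω → EuclideanSpace ℝ (Fin n))
    (hX0 : ∀ ω, X 0 ω = x 0)
    (hXdyn : ∀ t ω, X (t + 1) ω = f (X t ω) (u t) t + w t ω)
    (hxdyn : ∀ t, x (t + 1) = f (x t) (u t) t)
    (hXm : ∀ t, Measurable (X t)) (hwm : ∀ t, Measurable (w t))
    (hindep : ∀ t, IndepFun (w t) (X t) μ)
    (hwint : ∀ t, Integrable (w t) μ)
    (hwmean : ∀ t, (∫ ω, w t ω ∂μ) = 0)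
    (hwsq : ∀ t (i : Fin n), MemLp (fun ω => w t ω i) 2 μ)
    (hwvar : ∀ t (i : Fin n), variance (fun ω => w t ω i) μ ≤ σ t ^ 2) :
    ∀ t : ℕ, (∫ ω, ‖X t ω - x t‖ ^ 2 ∂μ) ≤
      n * ((∏ k ∈ Finset.range t, L k ^ 2) *
        ∑ k ∈ Finset.range t, σ k ^ 2 / ∏ j ∈ Finset.range (k + 1), L j ^ 2) := by
  -- coordinate means are zero
  have hwmean_coord : ∀ t (i : Fin n), (∫ ω, w t ω i ∂μ) = 0 := by
    intro t i
    have h := (EuclideanSpace.proj (𝕜 := ℝ) i).integral_comp_comm (hwint t)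
    simpa [hwmean t] using h
  -- w t is MemLp 2 as a vector-valued function
  have hwL2 : ∀ t, MemLp (w t) 2 μ := by
    intro t
    have hg : MemLp (fun ω => ∑ i, |w t ω i|) 2 μ := by
      have := memLp_finset_sum (μ := μ) (p := 2) (Finset.univ : Finset (Fin n))
        (f := fun i ω => |w t ω i|) (fun i _ => (hwsq t i).abs)
      simpa using this
    refine hg.of_le (hwm t).aestronglyMeasurable ?_
    filter_upwards with ω
    have h1 : ‖w t ω‖ ≤ ∑ i, |w t ω i| := euclid_norm_le_sum_abs _
    have h2 : (0:ℝ) ≤ ∑ i, |w t ω i| := Finset.sum_nonneg fun i _ => abs_nonneg _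
    rwa [Real.norm_eq_abs, abs_of_nonneg h2]
  -- ∫ ‖w t‖² ≤ n σ t ²
  have hwnormsq : ∀ t, (∫ ω, ‖w t ω‖ ^ 2 ∂μ) ≤ n * σ t ^ 2 := by
    intro t
    have heq : (∫ ω, ‖w t ω‖ ^ 2 ∂μ) = ∑ i, ∫ ω, (w t ω i) ^ 2 ∂μ := by
      rw [← integral_finset_sum _ (fun i _ => (hwsq t i).integrable_sq)]
      exact integral_congr_ae (Filter.Eventually.of_forall fun ω => euclid_norm_sq_eq _)
    rw [heq]
    calc ∑ i, ∫ ω, (w t ω i) ^ 2 ∂μ ≤ ∑ _i : Fin n, σ t ^ 2 := by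
          apply Finset.sum_le_sum
          intro i _
          have hv := variance_eq_sub (hwsq t i)
          have : (∫ ω, (w t ω i) ^ 2 ∂μ) = variance (fun ω => w t ω i) μ := by
            rw [hv, hwmean_coord t i]
            simp
          rw [this]; exact hwvar t i
      _ = n * σ t ^ 2 := by simp [Finset.sum_const, nsmul_eq_mul]
  -- strengthened induction
  have key : ∀ t : ℕ, MemLp (fun ω => X t ω - x t) 2 μ ∧
      (∫ ω, ‖X t ω - x t‖ ^ 2 ∂μ) ≤
      n * ((∏ k ∈ Finset.range t, L k ^ 2) *
        ∑ k ∈ Finset.range t, σ k ^ 2 / ∏ j ∈ Finset.range (k + 1), L j ^ 2) := by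
    intro t
    induction t with
    | zero =>
      constructor
      · have : (fun ω => X 0 ω - x 0) = fun _ => 0 := funext fun ω => by simp [hX0 ω]
        rw [this]; exact memLp_const 0
      · have h0 : ∀ ω, ‖X 0 ω - x 0‖ ^ 2 = 0 := fun ω => by simp [hX0 ω]
        simp [h0]
    | succ t ih =>
      obtain ⟨ihL2, ihB⟩ := ih
      set a : Ω → EuclideanSpace ℝ (Fin n) :=
        fun ω => f (X t ω) (u t) t - f (x t) (u t) t with ha
      have ham : Measurable a := ((hfm t).comp (hXm t)).sub measurable_const
      have haL2 : MemLp a 2 μ := by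
        refine MemLp.of_le_mul (c := L t) ihL2 ham.aestronglyMeasurable ?_
        filter_upwards with ω
        simpa [ha, Real.norm_eq_abs] using hf t (u t) (X t ω) (x t)
      have hdecomp : (fun ω => X (t+1) ω - x (t+1)) = fun ω => a ω + w t ω := by
        funext ω
        rw [hXdyn t ω, hxdyn t]
        simp [ha]
        abel
      -- integrability facts
      have Ia : Integrable (fun ω => ‖a ω‖ ^ 2) μ :=
        (memLp_two_iff_integrable_sq_norm ham.aestronglyMeasurable).mp haL2
      have Iw : Integrable (fun ω => ‖w t ω‖ ^ 2) μ :=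
        (memLp_two_iff_integrable_sq_norm (hwm t).aestronglyMeasurable).mp (hwL2 t)
      have IX : Integrable (fun ω => ‖X t ω - x t‖ ^ 2) μ :=
        (memLp_two_iff_integrable_sq_norm ((hXm t).sub measurable_const).aestronglyMeasurable).mp ihL2
      -- coordinates of a are MemLp 2
      have haCoord : ∀ i : Fin n, MemLp (fun ω => a ω i) 2 μ := by
        intro i
        refine haL2.of_le (((measurable_pi_apply i).comp (WithLp.measurable_ofLp 2 _)).comp ham).aestronglyMeasurable ?_
        filter_upwards with ω
        simpa [Real.norm_eq_abs] using euclid_coord_abs_le_norm (a ω) i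
      have Imul : ∀ i : Fin n, Integrable (fun ω => a ω i * w t ω i) μ := by
        intro i
        have := ((hwsq t i).smul (haCoord i)
          (p := 2) (q := 2) (r := 1)) -- (a i) • (w i)
        rw [← memLp_one_iff_integrable]
        exact this
      have Iinner : Integrable (fun ω => ⟪a ω, w t ω⟫) μ := by
        have : (fun ω => ⟪a ω, w t ω⟫) = fun ω => ∑ i, a ω i * w t ω i := by
          funext ω
          simp [PiLp.inner_apply, RCLike.inner_apply, conj_trivial, mul_comm]
        rw [this]
        exact integrable_finset_sum _ fun i _ => Imul i
      -- cross term is zero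
      have hcross : (∫ ω, ⟪a ω, w t ω⟫ ∂μ) = 0 := by
        have : (∫ ω, ⟪a ω, w t ω⟫ ∂μ) = ∑ i, ∫ ω, a ω i * w t ω i ∂μ := by
          rw [← integral_finset_sum _ fun i _ => Imul i]
          apply integral_congr_ae
          filter_upwards with ω
          simp [PiLp.inner_apply, RCLike.inner_apply, conj_trivial, mul_comm]
        rw [this]
        apply Finset.sum_eq_zero
        intro i _
        have hφ : Measurable (fun v : EuclideanSpace ℝ (Fin n) => v i) :=
          ((measurable_pi_apply i).comp (WithLp.measurable_ofLp 2 _))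
        have hψ : Measurable (fun y : EuclideanSpace ℝ (Fin n) =>
            (f y (u t) t - f (x t) (u t) t) i) :=
          ((measurable_pi_apply i).comp (WithLp.measurable_ofLp 2 _)).comp ((hfm t).sub measurable_const)
        have hind : IndepFun (fun ω => a ω i) (fun ω => w t ω i) μ :=
          ((hindep t).comp hφ hψ).symm
        have := hind.integral_mul_eq_mul_integral
          (((measurable_pi_apply i).comp (WithLp.measurable_ofLp 2 _)).comp ham).aestronglyMeasurable
          (((measurable_pi_apply i).comp (WithLp.measurable_ofLp 2 _)).comp (hwm t)).aestronglyMeasurable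
        calc (∫ ω, a ω i * w t ω i ∂μ)
            = (∫ ω, a ω i ∂μ) * ∫ ω, w t ω i ∂μ := this
          _ = 0 := by rw [hwmean_coord t i, mul_zero]
      -- main expansion
      have hexp : (∫ ω, ‖X (t+1) ω - x (t+1)‖ ^ 2 ∂μ)
          = (∫ ω, ‖a ω‖ ^ 2 ∂μ) + (∫ ω, ‖w t ω‖ ^ 2 ∂μ) := by
        have h1 : (fun ω => ‖X (t+1) ω - x (t+1)‖ ^ 2)
            = fun ω => ‖a ω‖ ^ 2 + 2 * ⟪a ω, w t ω⟫ + ‖w t ω‖ ^ 2 := by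
          funext ω
          rw [show X (t+1) ω - x (t+1) = a ω + w t ω from congrFun hdecomp ω]
          exact norm_add_sq_real (a ω) (w t ω)
        have I2' : Integrable (fun ω => 2 * ⟪a ω, w t ω⟫) μ := Iinner.const_mul 2
        have I12 : Integrable (fun ω => ‖a ω‖ ^ 2 + 2 * ⟪a ω, w t ω⟫) μ := Ia.add I2'
        rw [h1, integral_add I12 Iw, integral_add Ia I2', integral_const_mul, hcross]
        ring
      -- bound on ∫‖a‖²
      have haB : (∫ ω, ‖a ω‖ ^ 2 ∂μ) ≤ L t ^ 2 * ∫ ω, ‖X t ω - x t‖ ^ 2 ∂μ := by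
        rw [← integral_const_mul]
        apply integral_mono Ia (IX.const_mul _)
        intro ω
        have h := hf t (u t) (X t ω) (x t)
        have h2 : ‖a ω‖ ^ 2 ≤ (L t * ‖X t ω - x t‖) ^ 2 := by
          apply sq_le_sq' _ h
          have := norm_nonneg (a ω)
          nlinarith [mul_nonneg (hL t).le (norm_nonneg (X t ω - x t))]
        calc ‖a ω‖ ^ 2 ≤ (L t * ‖X t ω - x t‖) ^ 2 := h2
          _ = L t ^ 2 * ‖X t ω - x t‖ ^ 2 := by ring
      constructor
      · rw [hdecomp]; exact haL2.add (hwL2 t)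
      · have hPpos : ∀ m : ℕ, (0:ℝ) < ∏ j ∈ Finset.range m, L j ^ 2 :=
          fun m => Finset.prod_pos fun j _ => pow_pos (hL j) 2
        have hfinal : n * ((∏ k ∈ Finset.range (t+1), L k ^ 2) *
            ∑ k ∈ Finset.range (t+1), σ k ^ 2 / ∏ j ∈ Finset.range (k + 1), L j ^ 2)
            = L t ^ 2 * (n * ((∏ k ∈ Finset.range t, L k ^ 2) *
              ∑ k ∈ Finset.range t, σ k ^ 2 / ∏ j ∈ Finset.range (k + 1), L j ^ 2))
              + n * σ t ^ 2 := by
          rw [Finset.sum_range_succ, mul_add, mul_add]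
          have hc : (∏ k ∈ Finset.range (t+1), L k ^ 2) *
              (σ t ^ 2 / ∏ j ∈ Finset.range (t + 1), L j ^ 2) = σ t ^ 2 :=
            mul_div_cancel₀ _ (hPpos (t+1)).ne'
          rw [hc, Finset.prod_range_succ]
          ring
        rw [hexp, hfinal]
        have step1 : (∫ ω, ‖a ω‖ ^ 2 ∂μ) ≤ L t ^ 2 * (n * ((∏ k ∈ Finset.range t, L k ^ 2) *
            ∑ k ∈ Finset.range t, σ k ^ 2 / ∏ j ∈ Finset.range (k + 1), L j ^ 2)) :=
          haB.trans (mul_le_mul_of_nonneg_left ihB (sq_nonneg _))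
        exact add_le_add step1 (hwnormsq t)
  exact fun t => (key t).2
end
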